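/- Let d, n be positive integers and let Ω₁, …, Ωₙ be nonempty compact convex subsets of ℝ^d. Let X be the convex hull of ⋃ᵢ Ωᵢ, V = Ω₁ × ⋯ × Ωₙ, Y = { ((y₁,s₁),…,(yₙ,sₙ)) ∈ (ℝ^d × ℝ)^n : ‖yᵢ‖ ≤ sᵢ for all i, ∑ᵢ sᵢ = 1 }, and f(x, v, y) = ∑ᵢ ⟨x − vᵢ, yᵢ⟩. Then the value min over x ∈ X of max over (y, v) ∈ Y × V of f(x, v, y) equals R* := inf over x ∈ ℝ^d of max over i of sup over v ∈ Ωᵢ of ‖x − v‖ (the smallest enclosing ball radius). -/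

import Mathlib

open RealInnerProductSpace

/-- **SEB as a zero-sum game (value).** The minimax value of the SEB game,
`min_{x ∈ X} max_{(y, v) ∈ Y × V} ∑ i ⟪x - vᵢ, yᵢ⟫`, equals the smallest
enclosing ball radius `R* = inf_x max_i sup_{v ∈ Ωᵢ} ‖x - v‖`. -/
theorem seb_game_value (d n : ℕ) (hd : 0 < d) (hn : 0 < n)
    (Ω : Fin n → Set (EuclideanSpace ℝ (Fin d)))
    (hne : ∀ i, (Ω i).Nonempty) (hcpt : ∀ i, IsCompact (Ω i))
    (hconv : ∀ i, Convex ℝ (Ω i)) :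
    (⨅ x : {x : EuclideanSpace ℝ (Fin d) // x ∈ convexHull ℝ (⋃ i, Ω i)},
      ⨆ q : {q : (Fin n → (EuclideanSpace ℝ (Fin d)) × ℝ) ×
          (Fin n → EuclideanSpace ℝ (Fin d)) //
        ((∀ i, ‖(q.1 i).1‖ ≤ (q.1 i).2) ∧ (∑ i, (q.1 i).2) = 1) ∧ ∀ i, q.2 i ∈ Ω i},
        ∑ i, (inner ℝ (x.1 - q.1.2 i) ((q.1.1 i).1) : ℝ)) =
    ⨅ x : EuclideanSpace ℝ (Fin d), ⨆ i, ⨆ v : (Ω i), ‖x - v.1‖ := by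
  classical
  haveI : NeZero n := ⟨hn.ne'⟩
  haveI : ∀ i, Nonempty (Ω i) := fun i => (hne i).to_subtype
  let E := EuclideanSpace ℝ (Fin d)
  set g : E → ℝ := fun x => ⨆ i, ⨆ v : (Ω i), ‖x - v.1‖ with hgdef
  -- boundedness of inner sup
  have hbdd1 : ∀ (x : E) (i : Fin n),
      BddAbove (Set.range fun v : (Ω i) => ‖x - v.1‖) := by
    intro x i
    have : Set.range (fun v : (Ω i) => ‖x - v.1‖) = (fun v => ‖x - v‖) '' (Ω i) := by
      rw [Set.image_eq_range]
    rw [this]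
    exact (hcpt i).bddAbove_image ((continuous_const.sub continuous_id).norm.continuousOn)
  have hbdd2 : ∀ x : E, BddAbove (Set.range fun i : Fin n => ⨆ v : (Ω i), ‖x - v.1‖) :=
    fun x => (Set.finite_range _).bddAbove
  -- each term is ≤ g x
  have hterm : ∀ (x : E) (i : Fin n) (v : E), v ∈ Ω i → ‖x - v‖ ≤ g x := by
    intro x i v hv
    calc ‖x - v‖ ≤ ⨆ v : (Ω i), ‖x - v.1‖ := le_ciSup (hbdd1 x i) ⟨v, hv⟩
    _ ≤ g x := le_ciSup (hbdd2 x) i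
  have hgnonneg : ∀ x : E, 0 ≤ g x := by
    intro x
    obtain ⟨v, hv⟩ := hne 0
    exact (norm_nonneg _).trans (hterm x 0 v hv)
  have hgmono : ∀ p x : E, (∀ i, ∀ v ∈ Ω i, ‖p - v‖ ≤ ‖x - v‖) → g p ≤ g x := by
    intro p x h
    refine ciSup_le fun i => ciSup_le fun v => ?_
    exact (h i v.1 v.2).trans (hterm x i v.1 v.2)
  -- Step A : the inner sup equals g x
  have stepA : ∀ x : E,
      (⨆ q : {q : (Fin n → E × ℝ) × (Fin n → E) //
        ((∀ i, ‖(q.1 i).1‖ ≤ (q.1 i).2) ∧ (∑ i, (q.1 i).2) = 1) ∧ ∀ i, q.2 i ∈ Ω i},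
        ∑ i, (inner ℝ (x - q.1.2 i) ((q.1.1 i).1) : ℝ)) = g x := by
    intro x
    have hub : ∀ q : {q : (Fin n → E × ℝ) × (Fin n → E) //
        ((∀ i, ‖(q.1 i).1‖ ≤ (q.1 i).2) ∧ (∑ i, (q.1 i).2) = 1) ∧ ∀ i, q.2 i ∈ Ω i},
        (∑ i, (inner ℝ (x - q.1.2 i) ((q.1.1 i).1) : ℝ)) ≤ g x := by
      rintro ⟨⟨ys, v⟩, ⟨⟨hy, hs⟩, hv⟩⟩
      calc (∑ i, (inner ℝ (x - v i) ((ys i).1) : ℝ))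
          ≤ ∑ i, g x * (ys i).2 := by
            refine Finset.sum_le_sum fun i _ => ?_
            calc (inner ℝ (x - v i) ((ys i).1) : ℝ) ≤ ‖x - v i‖ * ‖(ys i).1‖ :=
                  real_inner_le_norm _ _
            _ ≤ g x * (ys i).2 :=
                  mul_le_mul (hterm x i (v i) (hv i)) (hy i) (norm_nonneg _) (hgnonneg x)
      _ = g x := by rw [← Finset.mul_sum, hs, mul_one]
    haveI : Nonempty {q : (Fin n → E × ℝ) × (Fin n → E) //
        ((∀ i, ‖(q.1 i).1‖ ≤ (q.1 i).2) ∧ (∑ i, (q.1 i).2) = 1) ∧ ∀ i, q.2 i ∈ Ω i} := by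
      refine ⟨⟨(fun _ => (0, (n : ℝ)⁻¹), fun j => (hne j).some), ⟨⟨fun j => ?_, ?_⟩,
        fun j => (hne j).some_mem⟩⟩⟩
      · simp only [norm_zero]; positivity
      · rw [Finset.sum_const, Finset.card_fin, nsmul_eq_mul,
          mul_inv_cancel₀ (Nat.cast_ne_zero.2 hn.ne')]
    refine le_antisymm (ciSup_le hub) ?_
    refine ciSup_le fun i => ciSup_le fun v => ?_
    -- build the strategy achieving ‖x - v‖
    set y0 : E := ‖x - v.1‖⁻¹ • (x - v.1) with hy0
    have hy0n : ‖y0‖ ≤ 1 := by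
      rcases eq_or_ne (x - v.1) 0 with h | h
      · simp [hy0, h]
      · rw [hy0, norm_smul, norm_inv, norm_norm, inv_mul_cancel₀ (norm_ne_zero_iff.2 h)]
    set q0 : (Fin n → E × ℝ) × (Fin n → E) :=
      (fun j => if j = i then (y0, 1) else (0, 0),
       fun j => if j = i then v.1 else (hne j).some) with hq0
    have hq0mem : ((∀ j, ‖(q0.1 j).1‖ ≤ (q0.1 j).2) ∧ (∑ j, (q0.1 j).2) = 1) ∧
        ∀ j, q0.2 j ∈ Ω j := by
      refine ⟨⟨fun j => ?_, ?_⟩, fun j => ?_⟩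
      · by_cases h : j = i <;> simp [hq0, h, hy0n]
      · simp [hq0, apply_ite Prod.snd, Finset.sum_ite_eq']
      · by_cases h : j = i
        · simpa [hq0, h] using v.2
        · simpa [hq0, h] using (hne j).some_mem
    have hval : (∑ j, (inner ℝ (x - q0.2 j) ((q0.1 j).1) : ℝ)) = ‖x - v.1‖ := by
      have e1 : q0.2 i = v.1 := by simp [hq0]
      have e2 : (q0.1 i).1 = y0 := by simp [hq0]
      rw [Finset.sum_eq_single i]
      · rw [e1, e2]
        rcases eq_or_ne (x - v.1) 0 with h | h
        · simp [hy0, h]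
        · rw [hy0, real_inner_smul_right, real_inner_self_eq_norm_sq, sq,
            inv_mul_cancel_left₀ (norm_ne_zero_iff.2 h)]
      · intro j _ hj
        have : (q0.1 j).1 = 0 := by simp [hq0, hj]
        rw [this, inner_zero_right]
      · intro h; exact absurd (Finset.mem_univ i) h
    calc ‖x - v.1‖ = ∑ j, (inner ℝ (x - q0.2 j) ((q0.1 j).1) : ℝ) := hval.symm
    _ ≤ _ := le_ciSup (f := fun q : {q : (Fin n → E × ℝ) × (Fin n → E) //
        ((∀ i, ‖(q.1 i).1‖ ≤ (q.1 i).2) ∧ (∑ i, (q.1 i).2) = 1) ∧ ∀ i, q.2 i ∈ Ω i} =>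
        ∑ i, (inner ℝ (x - q.1.2 i) ((q.1.1 i).1) : ℝ))
        ⟨g x, by rintro r ⟨q, rfl⟩; exact hub q⟩ ⟨q0, hq0mem⟩
  -- rewrite LHS
  have hXne : (convexHull ℝ (⋃ i, Ω i)).Nonempty :=
    ⟨(hne 0).some, subset_convexHull ℝ _ (Set.mem_iUnion.2 ⟨0, (hne 0).some_mem⟩)⟩
  haveI : Nonempty {x : E // x ∈ convexHull ℝ (⋃ i, Ω i)} := ⟨⟨hXne.some, hXne.some_mem⟩⟩
  have hLHS : (⨅ x : {x : E // x ∈ convexHull ℝ (⋃ i, Ω i)},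
      ⨆ q : {q : (Fin n → E × ℝ) × (Fin n → E) //
        ((∀ i, ‖(q.1 i).1‖ ≤ (q.1 i).2) ∧ (∑ i, (q.1 i).2) = 1) ∧ ∀ i, q.2 i ∈ Ω i},
        ∑ i, (inner ℝ (x.1 - q.1.2 i) ((q.1.1 i).1) : ℝ)) =
      ⨅ x : {x : E // x ∈ convexHull ℝ (⋃ i, Ω i)}, g x.1 := by
    exact congrArg _ (funext fun x => stepA x.1)
  rw [hLHS]
  -- Step B : inf over hull = inf over all of E
  set K : Set E := closure (convexHull ℝ (⋃ i, Ω i)) with hK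
  have hKconv : Convex ℝ K := (convex_convexHull ℝ _).closure
  have hKcl : IsClosed K := isClosed_closure
  have bddBelowg : BddBelow (Set.range g) := ⟨0, by rintro r ⟨x, rfl⟩; exact hgnonneg x⟩
  have bddBelowg' : BddBelow (Set.range fun x : {x : E // x ∈ convexHull ℝ (⋃ i, Ω i)} =>
      g x.1) := ⟨0, by rintro r ⟨x, rfl⟩; exact hgnonneg x.1⟩
  refine le_antisymm ?_ (le_ciInf fun x => ciInf_le bddBelowg x.1)
  refine le_ciInf fun x => ?_
  -- project x onto K
  obtain ⟨p, hpK, hpmin⟩ := exists_norm_eq_iInf_of_complete_convex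
    (hXne.mono subset_closure) (hKcl.isComplete) hKconv x
  have hproj : ∀ w ∈ K, (inner ℝ (x - p) (w - p) : ℝ) ≤ 0 :=
    (norm_eq_iInf_iff_real_inner_le_zero hKconv hpK).1 hpmin
  have hcloser : ∀ i, ∀ v ∈ Ω i, ‖p - v‖ ≤ ‖x - v‖ := by
    intro i v hv
    have hvK : v ∈ K := subset_closure (subset_convexHull ℝ _ (Set.mem_iUnion.2 ⟨i, hv⟩))
    have h1 : (inner ℝ (x - p) (v - p) : ℝ) ≤ 0 := hproj v hvK
    have h2 : ‖x - v‖ ^ 2 = ‖x - p‖ ^ 2 + 2 * (inner ℝ (x - p) (p - v) : ℝ) + ‖p - v‖ ^ 2 := by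
      have : x - v = (x - p) + (p - v) := by abel
      rw [this, norm_add_sq_real]
    have h3 : (inner ℝ (x - p) (p - v) : ℝ) = -(inner ℝ (x - p) (v - p) : ℝ) := by
      rw [show p - v = -(v - p) by abel, inner_neg_right]
    have hsq : ‖p - v‖ ^ 2 ≤ ‖x - v‖ ^ 2 := by nlinarith [sq_nonneg ‖x - p‖]
    have := Real.sqrt_le_sqrt hsq
    rwa [Real.sqrt_sq (norm_nonneg _), Real.sqrt_sq (norm_nonneg _)] at this
  have hgp : g p ≤ g x := hgmono p x hcloser
  -- g is 1-Lipschitz (one side suffices)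
  have hlip : ∀ a b : E, g a ≤ g b + ‖a - b‖ := by
    intro a b
    refine ciSup_le fun i => ciSup_le fun v => ?_
    calc ‖a - v.1‖ ≤ ‖b - v.1‖ + ‖a - b‖ := by
          have : a - v.1 = (a - b) + (b - v.1) := by abel
          rw [this]; exact (norm_add_le _ _).trans (by rw [add_comm])
    _ ≤ g b + ‖a - b‖ := by gcongr; exact hterm b i v.1 v.2
  refine le_of_forall_pos_le_add fun ε hε => ?_
  obtain ⟨w, hwX, hwp⟩ := Metric.mem_closure_iff.1 hpK ε hε
  calc (⨅ x : {x : E // x ∈ convexHull ℝ (⋃ i, Ω i)}, g x.1)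
      ≤ g w := ciInf_le bddBelowg' ⟨w, hwX⟩
  _ ≤ g p + ‖w - p‖ := hlip w p
  _ ≤ g x + ε := by
      have : ‖w - p‖ < ε := by rwa [dist_comm, dist_eq_norm] at hwp
      have := hgp
      linarith
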